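/- Let ν be a measure on (0,∞) with ∫ x² ν(dx) < ∞. Define h̃ on the closed negative quadrant {(w₁,w₂) : w₁ ≤ 0, w₂ ≤ 0} by h̃(w₁,w₂) = (1/(w₁-w₂)) ∫ (e^{xw₁} - e^{xw₂} - x(w₁-w₂)) ν(dx) when w₁ ≠ w₂, and h̃(w,w) = ∫ x(e^{xw} - 1) ν(dx). Then h̃ is continuous on the negative quadrant and h̃(w₁,w₂) ≤ 0 everywhere on it. -/

import Mathlib

open MeasureTheory Real

/-- Auxiliary function: averaged exponential minus one. -/
noncomputable def gAux (u v : ℝ) : ℝ :=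
  ∫ t in (0:ℝ)..1, (Real.exp (t * u + (1 - t) * v) - 1)

lemma gAux_continuous : Continuous fun p : ℝ × ℝ => gAux p.1 p.2 := by
  apply intervalIntegral.continuous_parametric_intervalIntegral_of_continuous'
    (f := fun (p : ℝ × ℝ) (t : ℝ) => Real.exp (t * p.1 + (1 - t) * p.2) - 1)
  fun_prop

lemma gAux_diag (u : ℝ) : gAux u u = Real.exp u - 1 := by
  unfold gAux
  have : ∀ t : ℝ, t * u + (1 - t) * u = u := fun t => by ring
  simp [this]

lemma gAux_ne (u v : ℝ) (h : u ≠ v) :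
    gAux u v = (Real.exp u - Real.exp v) / (u - v) - 1 := by
  unfold gAux
  have huv : u - v ≠ 0 := sub_ne_zero.mpr h
  have h1 : ∀ t : ℝ, t * u + (1 - t) * v = (u - v) * t + v := fun t => by ring
  have h2 : (∫ t in (0:ℝ)..1, Real.exp ((u - v) * t + v))
      = (u - v)⁻¹ • ∫ t in ((u-v)*0+v)..((u-v)*1+v), Real.exp t :=
    intervalIntegral.integral_comp_mul_add Real.exp huv v
  rw [intervalIntegral.integral_sub
      ((Continuous.intervalIntegrable (by fun_prop) 0 1 :
        IntervalIntegrable (fun t : ℝ => Real.exp (t * u + (1 - t) * v)) volume 0 1))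
      intervalIntegrable_const]
  simp only [h1]
  rw [h2, integral_exp]
  have : (u - v) * 0 + v = v := by ring
  rw [this]
  have : (u - v) * 1 + v = u := by ring
  rw [this]
  simp [smul_eq_mul, div_eq_inv_mul]

lemma gAux_abs_le (u v : ℝ) (hu : u ≤ 0) (hv : v ≤ 0) : |gAux u v| ≤ |u| + |v| := by
  have := intervalIntegral.norm_integral_le_of_norm_le_const
    (C := |u| + |v|) (a := (0:ℝ)) (b := 1)
    (f := fun t : ℝ => Real.exp (t * u + (1 - t) * v) - 1) ?_
  · simpa [gAux] using this
  · intro t ht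
    rw [Set.uIoc_of_le (by norm_num : (0:ℝ) ≤ 1)] at ht
    obtain ⟨ht0, ht1⟩ := ht
    have hz : t * u + (1 - t) * v ≤ 0 := by nlinarith
    have h1 : Real.exp (t * u + (1 - t) * v) ≤ 1 := Real.exp_le_one_iff.mpr hz
    have h2 := Real.add_one_le_exp (t * u + (1 - t) * v)
    rw [Real.norm_eq_abs, abs_sub_comm, abs_of_nonneg (by linarith)]
    have hau := neg_abs_le u
    have hav := neg_abs_le v
    nlinarith

lemma gAux_nonpos (u v : ℝ) (hu : u ≤ 0) (hv : v ≤ 0) : gAux u v ≤ 0 := by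
  have h : 0 ≤ ∫ t in (0:ℝ)..1, -(Real.exp (t * u + (1 - t) * v) - 1) := by
    apply intervalIntegral.integral_nonneg (by norm_num)
    intro t ht
    have hz : t * u + (1 - t) * v ≤ 0 := by
      obtain ⟨ht0, ht1⟩ := ht; nlinarith
    have := Real.exp_le_one_iff.mpr hz
    linarith
  rw [intervalIntegral.integral_neg] at h
  unfold gAux
  linarith

theorem stmt_5
    (ν : Measure ℝ) (hsupp : ν (Set.Iic 0) = 0)
    (hmom : Integrable (fun x => x^2) ν)
    (htilde : ℝ → ℝ → ℝ)
    (hdef_ne : ∀ w₁ ≤ (0:ℝ), ∀ w₂ ≤ (0:ℝ), w₁ ≠ w₂ →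
      htilde w₁ w₂ = (1/(w₁ - w₂)) *
        ∫ x, (Real.exp (x * w₁) - Real.exp (x * w₂) - x * (w₁ - w₂)) ∂ν)
    (hdef_eq : ∀ w ≤ (0:ℝ),
      htilde w w = ∫ x, x * (Real.exp (x * w) - 1) ∂ν) :
    ContinuousOn (fun q : ℝ × ℝ => htilde q.1 q.2) (Set.Iic 0 ×ˢ Set.Iic 0) ∧
    ∀ w₁ ≤ (0:ℝ), ∀ w₂ ≤ (0:ℝ), htilde w₁ w₂ ≤ 0 := by
  have hpos : ∀ᵐ x ∂ν, 0 < x := by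
    rw [ae_iff]
    convert hsupp using 2
    ext x; simp
  -- key identity
  have key : ∀ w₁ ≤ (0:ℝ), ∀ w₂ ≤ (0:ℝ),
      htilde w₁ w₂ = ∫ x, x * gAux (x * w₁) (x * w₂) ∂ν := by
    intro w₁ hw₁ w₂ hw₂
    by_cases h : w₁ = w₂
    · subst h
      rw [hdef_eq w₁ hw₁]
      exact integral_congr_ae (Filter.Eventually.of_forall fun x => by
        simp [gAux_diag])
    · rw [hdef_ne w₁ hw₁ w₂ hw₂ h, ← integral_const_mul]
      refine integral_congr_ae ?_
      filter_upwards [hpos] with x hx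
      have hx0 : x ≠ 0 := ne_of_gt hx
      have hne : x * w₁ ≠ x * w₂ := fun hc => h (mul_left_cancel₀ hx0 hc)
      rw [gAux_ne _ _ hne]
      have hsub : x * w₁ - x * w₂ ≠ 0 := sub_ne_zero.mpr hne
      have hw : w₁ - w₂ ≠ 0 := sub_ne_zero.mpr h
      field_simp
  constructor
  · -- continuity
    have hH : ContinuousOn (fun q : ℝ × ℝ => ∫ x, x * gAux (x * q.1) (x * q.2) ∂ν)
        (Set.Iic 0 ×ˢ Set.Iic 0) := by
      rintro ⟨a, b⟩ ⟨ha, hb⟩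
      simp only [Set.mem_Iic] at ha hb
      set T : Set (ℝ × ℝ) := Set.Ioi (a - 1) ×ˢ Set.Ioi (b - 1) with hT
      have hTnhds : T ∈ nhds ((a, b) : ℝ × ℝ) :=
        ((isOpen_Ioi.prod isOpen_Ioi).mem_nhds ⟨by simp, by simp⟩)
      rw [← continuousWithinAt_inter hTnhds]
      have hcont : ContinuousOn (fun q : ℝ × ℝ => ∫ x, x * gAux (x * q.1) (x * q.2) ∂ν)
          ((Set.Iic 0 ×ˢ Set.Iic 0) ∩ T) := by
        apply continuousOn_of_dominated
          (bound := fun x => ((1 - a) + (1 - b)) * x ^ 2)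
        · intro q hq
          exact (continuous_id.mul (gAux_continuous.comp
            ((continuous_id.mul continuous_const).prodMk
              (continuous_id.mul continuous_const)))).aestronglyMeasurable
        · rintro ⟨w₁, w₂⟩ ⟨⟨hw₁, hw₂⟩, hw₁', hw₂'⟩
          simp only [Set.mem_Iic] at hw₁ hw₂
          simp only [Set.mem_Ioi] at hw₁' hw₂'
          filter_upwards [hpos] with x hx
          have h1 : |gAux (x * w₁) (x * w₂)| ≤ |x * w₁| + |x * w₂| :=
            gAux_abs_le _ _ (mul_nonpos_of_nonneg_of_nonpos hx.le hw₁)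
              (mul_nonpos_of_nonneg_of_nonpos hx.le hw₂)
          have h2 : |x * w₁| = x * (-w₁) := by
            rw [abs_mul, abs_of_pos hx, abs_of_nonpos hw₁]
          have h3 : |x * w₂| = x * (-w₂) := by
            rw [abs_mul, abs_of_pos hx, abs_of_nonpos hw₂]
          rw [Real.norm_eq_abs, abs_mul, abs_of_pos hx]
          nlinarith [abs_nonneg (gAux (x * w₁) (x * w₂))]
        · exact hmom.const_mul _
        · exact Filter.Eventually.of_forall fun x =>
            (continuous_const.mul (gAux_continuous.comp
              ((continuous_const.mul continuous_fst).prodMk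
                (continuous_const.mul continuous_snd)))).continuousOn
      exact hcont (a, b) ⟨⟨Set.mem_Iic.2 ha, Set.mem_Iic.2 hb⟩,
        Set.mem_Ioi.2 (by linarith), Set.mem_Ioi.2 (by linarith)⟩
    exact hH.congr fun q hq => key q.1 hq.1 q.2 hq.2
  · -- nonpositivity
    intro w₁ hw₁ w₂ hw₂
    rw [key w₁ hw₁ w₂ hw₂]
    apply integral_nonpos_of_ae
    filter_upwards [hpos] with x hx
    exact mul_nonpos_of_nonneg_of_nonpos hx.le
      (gAux_nonpos _ _ (mul_nonpos_of_nonneg_of_nonpos hx.le hw₁)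
        (mul_nonpos_of_nonneg_of_nonpos hx.le hw₂))
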